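/- Let K ≥ T ≥ 1. For every initial (gold) sequence y : Fin T → α and every sequence z : Fin T → α, the probability of z under the Parallel Scheduled Sampling proposal distribution with mixing probability p = 1 after K passes equals the probability of z under the sample-decoding distribution: q^K_y(z) = P_T(z). -/

import Mathlib

open scoped ENNReal BigOperators

noncomputable section

variable {α : Type*}

/-- The list of tokens of `w` strictly before position `t` (0-indexed),
i.e. the prefix `(w_1, …, w_{t-1})` in 1-indexed notation. -/
def prefList {n : ℕ} (w : Fin n → α) (t : Fin n) : List α :=
  List.ofFn (fun s : Fin (t : ℕ) => w ⟨(s : ℕ), s.2.trans t.2⟩)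

/-- The sample-decoding probability of the sequence `z`:
`P_T(z) = ∏_{t=1}^T μ(z_1,…,z_{t-1})(z_t)`. -/
def sampleDecodeProb {T : ℕ} (μ : List α → PMF α) (z : Fin T → α) : ℝ≥0∞ :=
  ∏ t : Fin T, μ (prefList z t) (z t)

/-- The pass kernel `Q_k` (mixing probability `p = 1`): given input sequence `w`,
positions `t < k` (1-indexed) are copied from `w` deterministically, and each position
`t ≥ k` is drawn independently from `μ(w_1,…,w_{t-1})`. -/
def passKernel [Fintype α] [DecidableEq α] {T : ℕ}
    (μ : List α → PMF α) (k : ℕ) (w : Fin T → α) : PMF (Fin T → α) :=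
  PMF.ofFintype
    (fun z => ∏ t : Fin T,
      if (t : ℕ) + 1 < k then (if z t = w t then 1 else 0)
      else μ (prefList w t) (z t))
    (by
      classical
      have h : ∀ t : Fin T,
          (∑ a : α, if (t : ℕ) + 1 < k then (if a = w t then (1 : ℝ≥0∞) else 0)
            else μ (prefList w t) a) = 1 := by
        intro t
        split
        · simp
        · rw [← tsum_fintype (L := .unconditional _)]
          exact (μ (prefList w t)).tsum_coe
      calc
        (∑ z : Fin T → α, ∏ t : Fin T,
            if (t : ℕ) + 1 < k then (if z t = w t then (1 : ℝ≥0∞) else 0)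
            else μ (prefList w t) (z t))
            = ∏ t : Fin T, ∑ a : α,
                (if (t : ℕ) + 1 < k then (if a = w t then (1 : ℝ≥0∞) else 0)
                  else μ (prefList w t) a) := by
              rw [Finset.prod_univ_sum]
              rw [Fintype.piFinset_univ]
        _ = 1 := by
              rw [Finset.prod_congr rfl (fun t _ => h t)]
              simp)

/-- The Parallel Scheduled Sampling proposal distribution with mixing probability `p = 1`
after `K` passes, starting from the gold sequence `y`: the kernels `Q_1, …, Q_K` applied
in succession to the point mass at `y`. -/
def pssProposal [Fintype α] [DecidableEq α] {T : ℕ}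
    (μ : List α → PMF α) (y : Fin T → α) : ℕ → PMF (Fin T → α)
  | 0 => PMF.pure y
  | k + 1 => (pssProposal μ y k).bind (passKernel μ (k + 1))

/-- The probability, under the distribution `q` on sequences, of the event that the
first `t` output tokens equal the prefix `z : Fin t → α`. -/
def prefixProb {T t : ℕ} (q : PMF (Fin T → α)) (z : Fin t → α) : ℝ≥0∞ :=
  q.toOuterMeasure {w | ∀ s : Fin T, (h : (s : ℕ) < t) → w s = z ⟨(s : ℕ), h⟩}

lemma prefList_congr {n : ℕ} (w z : Fin n → α) (t : Fin n)
    (h : ∀ s : Fin n, (s : ℕ) < (t : ℕ) → w s = z s) : prefList w t = prefList z t := by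
  unfold prefList
  congr 1
  funext s
  exact h _ s.2

lemma passKernel_eq_pure [Fintype α] [DecidableEq α] {T : ℕ}
    (μ : List α → PMF α) {k : ℕ} (hk : T ≤ k) (w : Fin T → α) :
    passKernel μ (k + 1) w = PMF.pure w := by
  ext z
  simp only [passKernel, PMF.ofFintype_apply, PMF.pure_apply]
  have hlt : ∀ t : Fin T, (t : ℕ) + 1 < k + 1 :=
    fun t => Nat.succ_lt_succ (lt_of_lt_of_le t.2 hk)
  rw [Finset.prod_congr rfl (fun t _ => if_pos (hlt t))]
  by_cases h : z = w
  · subst h; simp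
  · rw [if_neg h]
    obtain ⟨t, ht⟩ := Function.ne_iff.mp h
    exact Finset.prod_eq_zero (Finset.mem_univ t) (if_neg ht)

lemma pss_stable [Fintype α] [DecidableEq α] {T : ℕ} (μ : List α → PMF α) (y : Fin T → α)
    {K : ℕ} (hK : T ≤ K) : pssProposal μ y K = pssProposal μ y T := by
  induction hK with
  | refl => rfl
  | @step m hm ih =>
    show (pssProposal μ y m).bind (passKernel μ (m + 1)) = pssProposal μ y T
    have hpure : passKernel (T := T) μ (m + 1) = PMF.pure :=
      funext (passKernel_eq_pure μ hm)
    rw [hpure, PMF.bind_pure, ih]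

lemma pss_prefix [Fintype α] [DecidableEq α] {T : ℕ}
    (μ : List α → PMF α) (y : Fin T → α) (k : ℕ) (hk : k ≤ T) (z : Fin T → α) :
    (∑ w : Fin T → α, pssProposal μ y k w *
        ∏ t : Fin T, if (t : ℕ) < k then (if w t = z t then (1 : ℝ≥0∞) else 0) else 1)
      = ∏ t : Fin T, if (t : ℕ) < k then μ (prefList z t) (z t) else 1 := by
  classical
  induction k with
  | zero =>
    simp only [pssProposal, PMF.pure_apply, Nat.not_lt_zero, if_false, Finset.prod_const_one,
      mul_one]
    exact Finset.sum_eq_single_of_mem y (Finset.mem_univ y)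
      (fun b _ hb => by simp [hb]) |>.trans (by simp)
  | succ k ih =>
    have hk' : k < T := hk
    have hkT : k ≤ T := le_of_lt hk'
    set tk : Fin T := ⟨k, hk'⟩ with htk
    -- unfold pass k+1 as a bind
    have hb : ∀ z' : Fin T → α, pssProposal μ y (k + 1) z' =
        ∑ w : Fin T → α, pssProposal μ y k w * passKernel μ (k + 1) w z' := by
      intro z'
      show ((pssProposal μ y k).bind (passKernel μ (k + 1))) z' = _
      rw [PMF.bind_apply, tsum_fintype]
    calc
      (∑ z' : Fin T → α, pssProposal μ y (k + 1) z' *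
          ∏ t : Fin T, if (t : ℕ) < k + 1 then (if z' t = z t then (1 : ℝ≥0∞) else 0) else 1)
          = ∑ w : Fin T → α, pssProposal μ y k w *
              ∑ z' : Fin T → α, passKernel μ (k + 1) w z' *
                ∏ t : Fin T, if (t : ℕ) < k + 1 then (if z' t = z t then (1 : ℝ≥0∞) else 0)
                  else 1 := by
        rw [Finset.sum_congr rfl fun z' (_ : z' ∈ Finset.univ) => by
          rw [hb z', Finset.sum_mul]]
        rw [Finset.sum_comm]
        exact Finset.sum_congr rfl fun w _ => by
          rw [Finset.mul_sum]
          exact Finset.sum_congr rfl fun z' _ => mul_assoc _ _ _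
      _ = ∑ w : Fin T → α, pssProposal μ y k w *
            ((∏ t : Fin T, if (t : ℕ) < k then (if w t = z t then (1 : ℝ≥0∞) else 0) else 1) *
              μ (prefList w tk) (z tk)) := by
        refine Finset.sum_congr rfl fun w _ => ?_
        congr 1
        -- compute the inner sum over z'
        have hfac : ∀ z' : Fin T → α, passKernel μ (k + 1) w z' *
            ∏ t : Fin T, (if (t : ℕ) < k + 1 then (if z' t = z t then (1 : ℝ≥0∞) else 0) else 1)
            = ∏ t : Fin T,
              ((if (t : ℕ) + 1 < k + 1 then (if z' t = w t then (1 : ℝ≥0∞) else 0)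
                  else μ (prefList w t) (z' t)) *
                (if (t : ℕ) < k + 1 then (if z' t = z t then (1 : ℝ≥0∞) else 0) else 1)) := by
          intro z'
          rw [passKernel, PMF.ofFintype_apply, ← Finset.prod_mul_distrib]
        rw [Finset.sum_congr rfl fun z' _ => hfac z']
        rw [show (∑ z' : Fin T → α, ∏ t : Fin T,
              ((if (t : ℕ) + 1 < k + 1 then (if z' t = w t then (1 : ℝ≥0∞) else 0)
                  else μ (prefList w t) (z' t)) *
                (if (t : ℕ) < k + 1 then (if z' t = z t then (1 : ℝ≥0∞) else 0) else 1)))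
            = ∏ t : Fin T, ∑ a : α,
              ((if (t : ℕ) + 1 < k + 1 then (if a = w t then (1 : ℝ≥0∞) else 0)
                  else μ (prefList w t) a) *
                (if (t : ℕ) < k + 1 then (if a = z t then (1 : ℝ≥0∞) else 0) else 1)) from by
          rw [Finset.prod_univ_sum, Fintype.piFinset_univ]]
        have heval : ∀ t : Fin T, (∑ a : α,
            ((if (t : ℕ) + 1 < k + 1 then (if a = w t then (1 : ℝ≥0∞) else 0)
                else μ (prefList w t) a) *
              (if (t : ℕ) < k + 1 then (if a = z t then (1 : ℝ≥0∞) else 0) else 1)))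
            = (if (t : ℕ) < k then (if w t = z t then (1 : ℝ≥0∞) else 0) else 1) *
              (if t = tk then μ (prefList w t) (z t) else 1) := by
          intro t
          rcases lt_trichotomy (t : ℕ) k with h | h | h
          · have h1 : (t : ℕ) + 1 < k + 1 := Nat.succ_lt_succ h
            have h2 : (t : ℕ) < k + 1 := Nat.lt_succ_of_lt h
            have h3 : t ≠ tk := fun he => by rw [he] at h; exact absurd h (lt_irrefl k)
            simp only [if_pos h1, if_pos h2, if_pos h, if_neg h3, mul_one]
            by_cases hw : w t = z t
            · simp [hw]
            · rw [if_neg hw]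
              refine Finset.sum_eq_zero fun a _ => ?_
              by_cases ha : a = w t
              · simp [ha, hw]
              · simp [ha]
          · have h1 : ¬ ((t : ℕ) + 1 < k + 1) := by omega
            have h2 : (t : ℕ) < k + 1 := by omega
            have h3 : t = tk := Fin.ext h
            have h4 : ¬ ((t : ℕ) < k) := by omega
            simp only [if_neg h1, if_pos h2, if_neg h4, if_pos h3, one_mul]
            simp [mul_ite, Finset.sum_ite_eq']
          · have h1 : ¬ ((t : ℕ) + 1 < k + 1) := by omega
            have h2 : ¬ ((t : ℕ) < k + 1) := by omega
            have h3 : t ≠ tk := fun he => by rw [he] at h; exact absurd h (lt_irrefl k)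
            have h4 : ¬ ((t : ℕ) < k) := by omega
            simp only [if_neg h1, if_neg h2, if_neg h4, if_neg h3, mul_one, one_mul]
            rw [← tsum_fintype (L := .unconditional _)]
            exact (μ (prefList w t)).tsum_coe
        rw [Finset.prod_congr rfl fun t _ => heval t, Finset.prod_mul_distrib,
          Finset.prod_ite_eq' Finset.univ tk (fun t => μ (prefList w t) (z t))]
        simp
      _ = μ (prefList z tk) (z tk) *
            ∑ w : Fin T → α, pssProposal μ y k w *
              ∏ t : Fin T, if (t : ℕ) < k then (if w t = z t then (1 : ℝ≥0∞) else 0) else 1 := by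
        rw [Finset.mul_sum]
        refine Finset.sum_congr rfl fun w _ => ?_
        by_cases hagree : ∀ s : Fin T, (s : ℕ) < k → w s = z s
        · rw [prefList_congr w z tk hagree]
          ring
        · push_neg at hagree
          obtain ⟨s, hs, hws⟩ := hagree
          have hz : (∏ t : Fin T, if (t : ℕ) < k then (if w t = z t then (1 : ℝ≥0∞) else 0)
              else 1) = 0 :=
            Finset.prod_eq_zero (Finset.mem_univ s) (by rw [if_pos hs, if_neg hws])
          rw [hz]; ring
      _ = μ (prefList z tk) (z tk) *
            ∏ t : Fin T, if (t : ℕ) < k then μ (prefList z t) (z t) else 1 := by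
        rw [ih hkT]
      _ = ∏ t : Fin T, if (t : ℕ) < k + 1 then μ (prefList z t) (z t) else 1 := by
        have : ∀ t : Fin T, (if (t : ℕ) < k + 1 then μ (prefList z t) (z t) else 1)
            = (if (t : ℕ) < k then μ (prefList z t) (z t) else 1) *
              (if t = tk then μ (prefList z t) (z t) else 1) := by
          intro t
          rcases lt_trichotomy (t : ℕ) k with h | h | h
          · have h3 : t ≠ tk := fun he => by rw [he] at h; exact absurd h (lt_irrefl k)
            simp [h, Nat.lt_succ_of_lt h, h3]
          · have h3 : t = tk := Fin.ext h
            simp [h3, htk]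
          · have h3 : t ≠ tk := fun he => by rw [he] at h; exact absurd h (lt_irrefl k)
            have h2 : ¬ ((t : ℕ) < k + 1) := by omega
            have h4 : ¬ ((t : ℕ) < k) := by omega
            simp [h2, h3, h4]
        rw [Finset.prod_congr rfl fun t _ => this t, Finset.prod_mul_distrib,
          Finset.prod_ite_eq' Finset.univ tk (fun t => μ (prefList z t) (z t))]
        simp [mul_comm]

/-- For `K ≥ T ≥ 1`, the probability of any sequence `z` under the
Parallel Scheduled Sampling proposal distribution with mixing probability `p = 1` after
`K` passes, started from any gold sequence `y`, equals its sample-decoding probability. -/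
theorem pss_eq_sampleDecode [Fintype α] [DecidableEq α] [Nonempty α]
    {T K : ℕ} (hT : 1 ≤ T) (hK : T ≤ K)
    (μ : List α → PMF α) (y z : Fin T → α) :
    pssProposal μ y K z = sampleDecodeProb μ z := by
  classical
  rw [pss_stable μ y hK]
  have h := pss_prefix μ y T le_rfl z
  have hL : (∑ w : Fin T → α, pssProposal μ y T w *
      ∏ t : Fin T, if (t : ℕ) < T then (if w t = z t then (1 : ℝ≥0∞) else 0) else 1)
      = pssProposal μ y T z := by
    have hprod : ∀ w : Fin T → α,
        (∏ t : Fin T, if (t : ℕ) < T then (if w t = z t then (1 : ℝ≥0∞) else 0) else 1)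
        = if w = z then 1 else 0 := by
      intro w
      rw [Finset.prod_congr rfl fun t _ => if_pos t.2]
      by_cases hw : w = z
      · subst hw; simp
      · rw [if_neg hw]
        obtain ⟨t, ht⟩ := Function.ne_iff.mp hw
        exact Finset.prod_eq_zero (Finset.mem_univ t) (if_neg ht)
    rw [Finset.sum_congr rfl fun w _ => by rw [hprod w]]
    simp [mul_ite, Finset.sum_ite_eq']
  have hR : (∏ t : Fin T, if (t : ℕ) < T then μ (prefList z t) (z t) else 1)
      = sampleDecodeProb μ z :=
    Finset.prod_congr rfl fun t _ => if_pos t.2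
  rw [← hL, h, hR]

end
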